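/- arXiv:1903.06579 — 2 statements merged into one kernel-verified Lean document; each statement's English description precedes it below -/
import Mathlib

section
/- Let G=(V,E) be a connected simple graph not isomorphic to a star, let k be an integer with 1 ≤ k < |V|−1, and let G'=(V',E') = β(G,k). Then G has an independent set of size at least k if and only if there exists S ⊊ V' of size at least |L| + |M| + k such that G'[S] is a proportionally dense subgraph. -/
open SimpleGraph

/-- Number of neighbors of `v` inside `T`. -/
noncomputable def degIn {W : Type*} (G : SimpleGraph W) (T : Set W) (v : W) : ℕ :=
  (T ∩ G.neighborSet v).ncard

/-- `G[S]` is a proportionally dense subgraph. -/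
def IsPDS {W : Type*} (G : SimpleGraph W) (S : Set W) : Prop :=
  S ⊂ Set.univ ∧ 2 ≤ S.ncard ∧
    ∀ u ∈ S, degIn G Sᶜ u * (S.ncard - 1) ≤ degIn G S u * Sᶜ.ncard

/-- A star is a complete bipartite graph `K_{1,ℓ}`, `ℓ ≥ 1`. -/
def IsStar {V : Type*} (G : SimpleGraph V) : Prop :=
  ∃ ℓ : ℕ, 1 ≤ ℓ ∧ Nonempty (G ≃g completeBipartiteGraph Unit (Fin ℓ))

/-- The number `|L| = |M| ⬝ (|V| - k - 1) - k + 1` of extra vertices in `β(G,k)`. -/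
noncomputable def lsize {V : Type*} [Fintype V] (G : SimpleGraph V) (k : ℕ) : ℕ :=
  G.edgeSet.ncard * (Fintype.card V - k - 1) - k + 1

/-- Vertex type of the bipartite graph `β(G,k)`: `L` (the `Fin` part), `M` (edge
vertices), and `N = V`. -/
abbrev BetaVert (V : Type*) [Fintype V] (G : SimpleGraph V) (k : ℕ) : Type _ :=
  (Fin (lsize G k) ⊕ ↥G.edgeSet) ⊕ V

/-- The bipartite graph `β(G,k)`: every vertex of `M` is adjacent to every vertex
of `L`, and a vertex `e ∈ M` is adjacent to `u ∈ N` iff `u` is not an endpoint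
of the edge `e` of `G`; there are no other edges. -/
def betaGraph {V : Type*} [Fintype V] (G : SimpleGraph V) (k : ℕ) :
    SimpleGraph (BetaVert V G k) where
  Adj x y :=
    match x, y with
    | Sum.inl (Sum.inl _), Sum.inl (Sum.inr _) => True
    | Sum.inl (Sum.inr _), Sum.inl (Sum.inl _) => True
    | Sum.inl (Sum.inr e), Sum.inr u => u ∉ (e : Sym2 V)
    | Sum.inr u, Sum.inl (Sum.inr e) => u ∉ (e : Sym2 V)
    | _, _ => False
  symm := by
    exact ⟨by rintro ((a | e) | u) ((b | f) | v) h <;> simp_all⟩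
  loopless := by
    exact ⟨by rintro ((a | e) | u) h <;> simp_all⟩

/-- The set `L ∪ M` in `β(G,k)`. -/
def betaLM {V : Type*} [Fintype V] (G : SimpleGraph V) (k : ℕ) : Set (BetaVert V G k) :=
  Set.range Sum.inl

/-- The set `M` of edge-vertices in `β(G,k)`. -/
def betaM {V : Type*} [Fintype V] (G : SimpleGraph V) (k : ℕ) : Set (BetaVert V G k) :=
  Set.range (fun e : ↥G.edgeSet => Sum.inl (Sum.inr e))

namespace BetaProofAux

open Set

set_option linter.unusedSectionVars false
set_option linter.unusedVariables false

variable {V : Type*} [Fintype V] {G : SimpleGraph V} {k : ℕ}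

/-- The `L`-injection. -/
def gL (G : SimpleGraph V) (k : ℕ) : Fin (lsize G k) → BetaVert V G k :=
  fun a => Sum.inl (Sum.inl a)

/-- The `M`-injection. -/
def gM (G : SimpleGraph V) (k : ℕ) : ↥G.edgeSet → BetaVert V G k :=
  fun e => Sum.inl (Sum.inr e)

lemma gL_inj : Function.Injective (gL G k) := fun a b h => by
  simpa [gL] using h

lemma gM_inj : Function.Injective (gM G k) := fun a b h => by
  simpa [gM] using h

lemma ncard_sum_decomp {X Y : Type*} [Finite X] [Finite Y] (S : Set (X ⊕ Y)) :
    S.ncard = (Sum.inl ⁻¹' S).ncard + (Sum.inr ⁻¹' S).ncard := by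
  have h1 : S = Sum.inl '' (Sum.inl ⁻¹' S) ∪ Sum.inr '' (Sum.inr ⁻¹' S) := by
    ext x; cases x <;> simp
  have hdis : Disjoint (Sum.inl '' (Sum.inl ⁻¹' S) : Set (X ⊕ Y))
      (Sum.inr '' (Sum.inr ⁻¹' S)) := by
    rw [Set.disjoint_left]
    rintro _ ⟨a, _, rfl⟩ ⟨b, _, h⟩
    simp at h
  conv_lhs => rw [h1]
  rw [Set.ncard_union_eq hdis (Set.toFinite _) (Set.toFinite _),
    Set.ncard_image_of_injective _ Sum.inl_injective,
    Set.ncard_image_of_injective _ Sum.inr_injective]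

lemma ncard_decomp3 (S : Set (BetaVert V G k)) :
    S.ncard = (gL G k ⁻¹' S).ncard + (gM G k ⁻¹' S).ncard + (Sum.inr ⁻¹' S).ncard := by
  rw [ncard_sum_decomp S, ncard_sum_decomp (Sum.inl ⁻¹' S)]
  rfl

lemma card_total :
    Nat.card (BetaVert V G k) = lsize G k + G.edgeSet.ncard + Fintype.card V := by
  simp [Nat.card_sum, Nat.card_eq_fintype_card, Nat.card_coe_set_eq]

lemma ncard_inter_image {X Y : Type*} [Finite X] (f : X → Y) (hf : Function.Injective f)
    (T : Set Y) (B : Set X) : (T ∩ f '' B).ncard = (f ⁻¹' T ∩ B).ncard := by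
  rw [Set.inter_comm T, ← Set.image_inter_preimage, Set.ncard_image_of_injective _ hf,
    Set.inter_comm]

lemma ncard_inter_range {X Y : Type*} [Finite X] (f : X → Y) (hf : Function.Injective f)
    (T : Set Y) : (T ∩ Set.range f).ncard = (f ⁻¹' T).ncard := by
  rw [← Set.image_univ, ncard_inter_image f hf, Set.inter_univ]

lemma nbhd_L (a : Fin (lsize G k)) :
    (betaGraph G k).neighborSet (Sum.inl (Sum.inl a)) = Set.range (gM G k) := by
  ext x; rcases x with ((b|f)|u) <;> simp [betaGraph, SimpleGraph.neighborSet, gL, gM]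

lemma nbhd_M (e : ↥G.edgeSet) :
    (betaGraph G k).neighborSet (Sum.inl (Sum.inr e)) =
      Set.range (gL G k) ∪ Sum.inr '' {u : V | u ∉ (e : Sym2 V)} := by
  ext x; rcases x with ((b|f)|u) <;> simp [betaGraph, SimpleGraph.neighborSet, gL, gM]

lemma nbhd_N (u : V) :
    (betaGraph G k).neighborSet (Sum.inr u) =
      gM G k '' {e : ↥G.edgeSet | u ∉ (e : Sym2 V)} := by
  ext x; rcases x with ((b|f)|u) <;> simp [betaGraph, SimpleGraph.neighborSet, gM]

lemma degIn_L (T : Set (BetaVert V G k)) (a : Fin (lsize G k)) :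
    degIn (betaGraph G k) T (Sum.inl (Sum.inl a)) = (gM G k ⁻¹' T).ncard := by
  rw [degIn, nbhd_L, ncard_inter_range _ gM_inj]

lemma degIn_N (T : Set (BetaVert V G k)) (u : V) :
    degIn (betaGraph G k) T (Sum.inr u) =
      (gM G k ⁻¹' T ∩ {e : ↥G.edgeSet | u ∉ (e : Sym2 V)}).ncard := by
  rw [degIn, nbhd_N, ncard_inter_image _ gM_inj]

lemma degIn_M (T : Set (BetaVert V G k)) (e : ↥G.edgeSet) :
    degIn (betaGraph G k) T (Sum.inl (Sum.inr e)) =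
      (gL G k ⁻¹' T).ncard + (Sum.inr ⁻¹' T ∩ {u : V | u ∉ (e : Sym2 V)}).ncard := by
  rw [degIn, nbhd_M, Set.inter_union_distrib_left,
    Set.ncard_union_eq ?dis (Set.toFinite _) (Set.toFinite _),
    ncard_inter_range _ gL_inj, ncard_inter_image _ Sum.inr_injective]
  case dis =>
    rw [Set.disjoint_left]
    rintro x ⟨-, a, rfl⟩ ⟨-, u, -, h⟩
    simp [gL] at h

lemma edge_rep (e : ↥G.edgeSet) : ∃ x y : V, G.Adj x y ∧ (e : Sym2 V) = s(x, y) := by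
  refine ⟨(e : Sym2 V).out.1, (e : Sym2 V).out.2, ?_, (Quot.out_eq _).symm⟩
  have h := e.2
  conv at h => rw [← Quot.out_eq (e : Sym2 V)]
  exact h

lemma mem_set_eq {x y : V} (hxy : G.Adj x y) :
    {u : V | u ∈ (s(x, y) : Sym2 V)} = {x, y} := by
  ext u; simp [Sym2.mem_iff]

lemma ncard_notmem (e : ↥G.edgeSet) :
    {u : V | u ∉ (e : Sym2 V)}.ncard = Fintype.card V - 2 := by
  obtain ⟨x, y, hxy, hrep⟩ := edge_rep e
  have h1 : {u : V | u ∉ (e : Sym2 V)} = ({x, y} : Set V)ᶜ := by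
    rw [hrep]; ext u; simp [Sym2.mem_iff]
  have h2 : ({x, y} : Set V).ncard = 2 := Set.ncard_pair hxy.ne
  have h3 := Set.ncard_add_ncard_compl ({x, y} : Set V)
  rw [h1]
  rw [h2, Nat.card_eq_fintype_card] at h3
  omega

/-- A connected graph on `n` vertices has at least `n - 1` edges. -/
lemma edge_lb (hconn : G.Connected) : Fintype.card V - 1 ≤ G.edgeSet.ncard := by
  have hne : Nonempty V := hconn.nonempty
  obtain ⟨v₀⟩ := hne
  have key : ∀ v : V, v ≠ v₀ → ∃ w, G.Adj v w ∧ G.dist w v₀ < G.dist v v₀ := by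
    intro v hv
    obtain ⟨p, hp⟩ := hconn.exists_walk_length_eq_dist v v₀
    cases p with
    | nil => exact absurd rfl hv
    | @cons _ w _ h q =>
        refine ⟨w, h, ?_⟩
        have h1 := SimpleGraph.dist_le q
        simp [SimpleGraph.Walk.length_cons] at hp
        omega
  choose w hadj hlt using key
  have hcard := Nat.card_le_card_of_injective
    (fun v : {v : V // v ≠ v₀} =>
      (⟨s(v.1, w v.1 v.2), hadj v.1 v.2⟩ : ↥G.edgeSet)) ?inj
  case inj =>
    rintro ⟨v, hv⟩ ⟨v', hv'⟩ h
    rw [Subtype.ext_iff] at h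
    simp only [Subtype.ext_iff] at h ⊢
    rw [Sym2.eq_iff] at h
    rcases h with ⟨h3, -⟩ | ⟨h3, h4⟩
    · exact h3
    · exfalso
      have l1 := hlt v hv
      have l2 := hlt v' hv'
      have d1 := congrArg (fun z => G.dist z v₀) h3
      have d2 := congrArg (fun z => G.dist z v₀) h4
      omega
  have h0 : Nat.card {v : V // v ≠ v₀} = ({v₀} : Set V)ᶜ.ncard := by
    rw [← Nat.card_coe_set_eq]
    exact Nat.card_congr (Equiv.subtypeEquivRight (by simp))
  rw [h0, Nat.card_coe_set_eq] at hcard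
  have h3 := Set.ncard_add_ncard_compl ({v₀} : Set V)
  rw [Set.ncard_singleton, Nat.card_eq_fintype_card] at h3
  omega

end BetaProofAux

open BetaProofAux

/-- Theorem 2 of the paper (correctness of the bipartite reduction): `G` has an
independent set of size at least `k` iff `β(G,k)` has a PDS of size at least
`|L| + |M| + k`. -/
theorem beta_reduction_correct {V : Type*} [Fintype V] (G : SimpleGraph V)
    (hconn : G.Connected) (hstar : ¬ IsStar G)
    (k : ℕ) (hk1 : 1 ≤ k) (hk2 : k < Fintype.card V - 1) :
    (∃ I : Set V, I.Pairwise (fun a b => ¬ G.Adj a b) ∧ k ≤ I.ncard)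
      ↔ (∃ S : Set (BetaVert V G k),
          IsPDS (betaGraph G k) S ∧ lsize G k + G.edgeSet.ncard + k ≤ S.ncard) := by
  classical
  have hm1 : Fintype.card V - 1 ≤ G.edgeSet.ncard := edge_lb hconn
  have hn3 : k + 2 ≤ Fintype.card V := by omega
  set P : ℕ := G.edgeSet.ncard * (Fintype.card V - k - 1) with hP
  have hprod : Fintype.card V - 1 ≤ P := by
    calc Fintype.card V - 1 ≤ G.edgeSet.ncard := hm1
    _ = G.edgeSet.ncard * 1 := (mul_one _).symm
    _ ≤ P := Nat.mul_le_mul_left _ (by omega)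
  have hlP : lsize G k = P - k + 1 := rfl
  have hPm : P + G.edgeSet.ncard = G.edgeSet.ncard * (Fintype.card V - k) := by
    rw [hP, ← Nat.mul_succ]
    congr 1
    omega
  constructor
  · -- forward direction
    rintro ⟨I0, hI0, hI0k⟩
    obtain ⟨I, hIsub, hIcard⟩ := Set.exists_subset_card_eq hI0k
    have hI : I.Pairwise fun a b => ¬ G.Adj a b := hI0.mono hIsub
    set S : Set (BetaVert V G k) := Set.range Sum.inl ∪ Sum.inr '' I with hS
    have hSL : gL G k ⁻¹' S = Set.univ := by
      ext a; simp [hS, gL]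
    have hSM : gM G k ⁻¹' S = Set.univ := by
      ext e; simp [hS, gM]
    have hSN : Sum.inr ⁻¹' S = I := by
      ext u; simp [hS]
    have hIc : Iᶜ.ncard = Fintype.card V - k := by
      have h := Set.ncard_add_ncard_compl I
      rw [hIcard, Nat.card_eq_fintype_card] at h; omega
    have hcard : S.ncard = lsize G k + G.edgeSet.ncard + k := by
      rw [ncard_decomp3 S, hSL, hSM, hSN, Set.ncard_univ, Set.ncard_univ, hIcard,
        Nat.card_eq_fintype_card, Fintype.card_fin, Nat.card_coe_set_eq]
    have hccard : Sᶜ.ncard = Fintype.card V - k := by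
      rw [ncard_decomp3 Sᶜ, Set.preimage_compl, Set.preimage_compl, Set.preimage_compl,
        hSL, hSM, hSN, hIc]
      simp
    refine ⟨S, ⟨?_, ?_, ?_⟩, le_of_eq hcard.symm⟩
    · rw [Set.ssubset_univ_iff]
      intro h
      rw [h, Set.compl_univ, Set.ncard_empty] at hccard
      omega
    · rw [hcard, hlP]; omega
    · rintro ((a|e)|u) hu
      · rw [degIn_L, Set.preimage_compl, hSM, Set.compl_univ, Set.ncard_empty, Nat.zero_mul]
        exact Nat.zero_le _
      · -- M vertex
        obtain ⟨x, y, hxy, hrep⟩ := edge_rep e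
        rw [degIn_M, degIn_M, Set.preimage_compl, Set.preimage_compl, hSL, hSN,
          Set.compl_univ, Set.ncard_empty, Set.ncard_univ, Nat.card_eq_fintype_card,
          Fintype.card_fin, hcard, hccard, Set.inter_comm Iᶜ, Set.inter_comm I,
          ← Set.diff_eq]
        have hB : {u : V | u ∉ (e : Sym2 V)}.ncard = Fintype.card V - 2 := ncard_notmem e
        have p1 : ({u : V | u ∉ (e : Sym2 V)} ∩ I).ncard
            + ({u : V | u ∉ (e : Sym2 V)} \ I).ncard = Fintype.card V - 2 := by
          rw [Set.ncard_inter_add_ncard_diff_eq_ncard _ _ (Set.toFinite _), hB]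
        have hq := Set.ncard_inter_add_ncard_diff_eq_ncard I {u : V | u ∉ (e : Sym2 V)}
          (Set.toFinite _)
        rw [hIcard, Set.inter_comm] at hq
        have p3 : (I \ {u : V | u ∉ (e : Sym2 V)}).ncard ≤ 1 := by
          by_cases hx : x ∈ I
          · have hy : y ∉ I := fun hy => hI hx hy hxy.ne hxy
            have hsx : I \ {u : V | u ∉ (e : Sym2 V)} ⊆ {x} := by
              rintro z ⟨hzI, hzB⟩
              simp only [Set.mem_setOf_eq, not_not, hrep, Sym2.mem_iff] at hzB
              rcases hzB with rfl | rfl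
              · exact rfl
              · exact absurd hzI hy
            calc _ ≤ ({x} : Set V).ncard := Set.ncard_le_ncard hsx (Set.toFinite _)
            _ = 1 := Set.ncard_singleton x
          · have hsx : I \ {u : V | u ∉ (e : Sym2 V)} ⊆ {y} := by
              rintro z ⟨hzI, hzB⟩
              simp only [Set.mem_setOf_eq, not_not, hrep, Sym2.mem_iff] at hzB
              rcases hzB with rfl | rfl
              · exact absurd hzI hx
              · exact rfl
            calc _ ≤ ({y} : Set V).ncard := Set.ncard_le_ncard hsx (Set.toFinite _)
            _ = 1 := Set.ncard_singleton y
        have e2 : lsize G k + G.edgeSet.ncard + k - 1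
            = G.edgeSet.ncard * (Fintype.card V - k) := by
          rw [← hPm]; omega
        have e1 : ({u : V | u ∉ (e : Sym2 V)} \ I).ncard ≤ Fintype.card V - k - 1 := by
          omega
        have e3 : P ≤ lsize G k + ({u : V | u ∉ (e : Sym2 V)} ∩ I).ncard := by omega
        calc (0 + ({u : V | u ∉ (e : Sym2 V)} \ I).ncard)
              * (lsize G k + G.edgeSet.ncard + k - 1)
            = ({u : V | u ∉ (e : Sym2 V)} \ I).ncard
              * (G.edgeSet.ncard * (Fintype.card V - k)) := by rw [Nat.zero_add, e2]
          _ ≤ (Fintype.card V - k - 1) * (G.edgeSet.ncard * (Fintype.card V - k)) :=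
              Nat.mul_le_mul e1 (le_refl _)
          _ = P * (Fintype.card V - k) := by rw [hP]; ring
          _ ≤ (lsize G k + ({u : V | u ∉ (e : Sym2 V)} ∩ I).ncard)
              * (Fintype.card V - k) := Nat.mul_le_mul e3 (le_refl _)
      · rw [degIn_N, Set.preimage_compl, hSM, Set.compl_univ, Set.empty_inter,
          Set.ncard_empty, Nat.zero_mul]
        exact Nat.zero_le _
  · -- backward direction
    rintro ⟨S, ⟨hSu, hS2, hPDS⟩, hScard⟩
    have hdecomp := ncard_decomp3 S
    have hSLle : (gL G k ⁻¹' S).ncard ≤ lsize G k := by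
      have h := Set.ncard_le_ncard (Set.subset_univ (gL G k ⁻¹' S)) (Set.toFinite _)
      rwa [Set.ncard_univ, Nat.card_eq_fintype_card, Fintype.card_fin] at h
    have hSMle : (gM G k ⁻¹' S).ncard ≤ G.edgeSet.ncard := by
      have h := Set.ncard_le_ncard (Set.subset_univ (gM G k ⁻¹' S)) (Set.toFinite _)
      rwa [Set.ncard_univ, Nat.card_coe_set_eq] at h
    have hc : S.ncard + Sᶜ.ncard = lsize G k + G.edgeSet.ncard + Fintype.card V := by
      rw [Set.ncard_add_ncard_compl S, card_total]
    have hc1 : 1 ≤ Sᶜ.ncard := by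
      obtain ⟨w, -, hw⟩ := Set.exists_of_ssubset hSu
      exact (Set.ncard_pos (Set.toFinite _)).mpr ⟨w, hw⟩
    refine ⟨Sum.inr ⁻¹' S, ?_, by omega⟩
    intro a ha b hb hab hadj
    set e : ↥G.edgeSet := ⟨s(a, b), hadj⟩ with he
    -- Step 1: all of M is contained in S
    have hMsub : ∀ f : ↥G.edgeSet, gM G k f ∈ S := by
      by_cases hL : ∃ a0 : Fin (lsize G k), gL G k a0 ∈ S
      · obtain ⟨a0, ha0⟩ := hL
        by_contra hf
        push_neg at hf
        obtain ⟨f, hfS⟩ := hf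
        have hcond := hPDS _ ha0
        simp only [gL] at hcond
        rw [degIn_L, degIn_L, Set.preimage_compl] at hcond
        have hsplit := Set.ncard_add_ncard_compl (gM G k ⁻¹' S)
        rw [Nat.card_coe_set_eq] at hsplit
        have h1 : 1 ≤ ((gM G k ⁻¹' S)ᶜ).ncard :=
          (Set.ncard_pos (Set.toFinite _)).mpr ⟨f, hfS⟩
        have k1 : P + G.edgeSet.ncard ≤ (gM G k ⁻¹' S).ncard * Sᶜ.ncard := by
          calc P + G.edgeSet.ncard ≤ S.ncard - 1 := by omega
          _ ≤ ((gM G k ⁻¹' S)ᶜ).ncard * (S.ncard - 1) := Nat.le_mul_of_pos_left _ h1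
          _ ≤ _ := hcond
        have k4 : ((gM G k ⁻¹' S).ncard + 1) * Sᶜ.ncard
            ≤ G.edgeSet.ncard * (Fintype.card V - k) := by
          refine Nat.mul_le_mul (by omega) (by omega)
        rw [← hPm, Nat.succ_mul] at k4
        linarith
      · push_neg at hL
        have hsub : S ⊆ Set.range (gM G k) ∪ Set.range (Sum.inr : V → BetaVert V G k) := by
          rintro ((a0|f)|u) hx
          · exact absurd hx (hL a0)
          · exact Or.inl ⟨f, rfl⟩
          · exact Or.inr ⟨u, rfl⟩
        have hdis : Disjoint (Set.range (gM G k))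
            (Set.range (Sum.inr : V → BetaVert V G k)) := by
          rw [Set.disjoint_left]
          rintro z ⟨f, rfl⟩ ⟨u, hu⟩
          simp [gM] at hu
        have hun : (Set.range (gM G k) ∪ Set.range (Sum.inr : V → BetaVert V G k)).ncard
            = G.edgeSet.ncard + Fintype.card V := by
          rw [Set.ncard_union_eq hdis (Set.toFinite _) (Set.toFinite _),
            ← Set.image_univ, ← Set.image_univ,
            Set.ncard_image_of_injective _ gM_inj,
            Set.ncard_image_of_injective _ Sum.inr_injective,
            Set.ncard_univ, Set.ncard_univ, Nat.card_coe_set_eq,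
            Nat.card_eq_fintype_card]
        have hSeq := Set.eq_of_subset_of_ncard_le hsub (by rw [hun]; omega) (Set.toFinite _)
        intro f
        rw [hSeq]
        exact Or.inl ⟨f, rfl⟩
    have hee : gM G k e ∈ S := hMsub e
    have hcond := hPDS _ hee
    simp only [gM] at hcond
    rw [degIn_M, degIn_M] at hcond
    have hMc : gM G k ⁻¹' Sᶜ = ∅ := by
      ext f; simp [hMsub f]
    have h2 : Sum.inr ⁻¹' Sᶜ ∩ {u : V | u ∉ (e : Sym2 V)} = Sum.inr ⁻¹' Sᶜ := by
      refine Set.inter_eq_left.mpr ?_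
      intro u hu hmem
      rw [he] at hmem
      simp only [Sym2.mem_iff] at hmem
      rcases hmem with rfl | rfl
      · exact hu ha
      · exact hu hb
    have hdc : (gL G k ⁻¹' Sᶜ).ncard + (Sum.inr ⁻¹' Sᶜ ∩ {u : V | u ∉ (e : Sym2 V)}).ncard
        = Sᶜ.ncard := by
      rw [h2, ncard_decomp3 Sᶜ, hMc, Set.ncard_empty]
      omega
    have hds : (gL G k ⁻¹' S).ncard + (Sum.inr ⁻¹' S ∩ {u : V | u ∉ (e : Sym2 V)}).ncard
        ≤ S.ncard - 3 := by
      have hM1 : 1 ≤ (gM G k ⁻¹' S).ncard :=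
        (Set.ncard_pos (Set.toFinite _)).mpr ⟨e, hee⟩
      have hsub2 : (Sum.inr ⁻¹' S ∩ {u : V | u ∉ (e : Sym2 V)}) ∪ {a, b} ⊆ Sum.inr ⁻¹' S := by
        refine Set.union_subset Set.inter_subset_left ?_
        rintro z (rfl | rfl)
        · exact ha
        · exact hb
      have hdisj : Disjoint (Sum.inr ⁻¹' S ∩ {u : V | u ∉ (e : Sym2 V)}) ({a, b} : Set V) := by
        rw [Set.disjoint_right]
        rintro z (rfl | rfl) ⟨-, hz⟩
        · exact hz (by rw [he]; exact Sym2.mem_mk_left _ _)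
        · exact hz (by rw [he]; exact Sym2.mem_mk_right _ _)
      have hcc : (Sum.inr ⁻¹' S ∩ {u : V | u ∉ (e : Sym2 V)}).ncard + 2
          ≤ (Sum.inr ⁻¹' S).ncard := by
        have h3 := Set.ncard_union_eq hdisj (Set.toFinite _) (Set.toFinite _)
        rw [Set.ncard_pair hab] at h3
        have h4 := Set.ncard_le_ncard hsub2 (Set.toFinite _)
        omega
      omega
    have hS4 : 4 ≤ S.ncard := by omega
    have hfin : Sᶜ.ncard * (S.ncard - 1) ≤ Sᶜ.ncard * (S.ncard - 3) := by
      calc Sᶜ.ncard * (S.ncard - 1)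
          = ((gL G k ⁻¹' Sᶜ).ncard
            + (Sum.inr ⁻¹' Sᶜ ∩ {u : V | u ∉ (e : Sym2 V)}).ncard) * (S.ncard - 1) := by
            rw [hdc]
        _ ≤ ((gL G k ⁻¹' S).ncard
            + (Sum.inr ⁻¹' S ∩ {u : V | u ∉ (e : Sym2 V)}).ncard) * Sᶜ.ncard := hcond
        _ ≤ (S.ncard - 3) * Sᶜ.ncard := Nat.mul_le_mul hds (le_refl _)
        _ = Sᶜ.ncard * (S.ncard - 3) := Nat.mul_comm _ _
    have := Nat.le_of_mul_le_mul_left hfin (by omega)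
    omega
end

section
/- Let G=(V,E) be a connected simple graph not isomorphic to a star, let k be an integer with 1 ≤ k < |V|−1, and let G'=(V',E') = β(G,k). If S ⊊ V' is such that L ∪ M ⊊ S and G'[S] is a proportionally dense subgraph, then |S| ≥ |L| + |M| + k. -/
open SimpleGraph

lemma connected_card_le {V : Type*} [Fintype V] {G : SimpleGraph V}
    (hconn : G.Connected) : Fintype.card V ≤ G.edgeSet.ncard + 1 := by
  classical
  obtain ⟨r⟩ := hconn.nonempty
  have step : ∀ v : V, v ≠ r → ∃ u, G.Adj v u ∧ G.dist u r < G.dist v r := by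
    intro v hv
    obtain ⟨p, hp⟩ := (hconn v r).exists_walk_length_eq_dist
    cases p with
    | nil => exact absurd rfl hv
    | cons h q =>
        refine ⟨_, h, ?_⟩
        have h1 := G.dist_le q
        simp only [Walk.length_cons] at hp
        omega
  choose c hc1 hc2 using step
  have hinj : Function.Injective
      (fun v : {v : V // v ≠ r} =>
        (⟨s(v.1, c v.1 v.2), G.mem_edgeSet.mpr (hc1 v.1 v.2)⟩ : G.edgeSet)) := by
    rintro ⟨v, hv⟩ ⟨w, hw⟩ h
    simp only [Subtype.mk.injEq, Sym2.eq_iff] at h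
    simp only [Subtype.mk.injEq]
    rcases h with ⟨h1, h2⟩ | ⟨h1, h2⟩
    · exact h1
    · exfalso
      have a1 := hc2 v hv
      have a2 := hc2 w hw
      rw [h2] at a1
      rw [← h1] at a2
      omega
  have hle := Nat.card_le_card_of_injective _ hinj
  rw [Nat.card_coe_set_eq] at hle
  rw [Nat.card_eq_fintype_card] at hle
  have : Fintype.card {v : V // v ≠ r} = Fintype.card V - 1 := by
    simp [Fintype.card_subtype_compl]
  have hpos : 0 < Fintype.card V := Fintype.card_pos_iff.mpr ⟨r⟩
  omega


/-- Lemma 7 of the paper: if `L ∪ M ⊊ S` and `β(G,k)[S]` is a PDS, then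
`|S| ≥ |L| + |M| + k`. -/
theorem beta_LM_pds_large {V : Type*} [Fintype V] (G : SimpleGraph V)
    (hconn : G.Connected) (hstar : ¬ IsStar G)
    (k : ℕ) (hk1 : 1 ≤ k) (hk2 : k < Fintype.card V - 1)
    (S : Set (BetaVert V G k)) (hsub : betaLM G k ⊂ S)
    (hPDS : IsPDS (betaGraph G k) S) :
    lsize G k + G.edgeSet.ncard + k ≤ S.ncard := by
  classical
  set n := Fintype.card V with hn
  set m := G.edgeSet.ncard with hm
  set l := lsize G k with hl
  set T : Set V := Sum.inr ⁻¹' S with hT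
  have hLM : betaLM G k ⊆ S := hsub.1
  -- decomposition of S
  have hSdecomp : S = Set.range Sum.inl ∪ Sum.inr '' T := by
    ext x
    cases x with
    | inl y =>
        simp only [Set.mem_union, Set.mem_range, Set.mem_image]
        constructor
        · intro _; exact Or.inl ⟨y, rfl⟩
        · intro _; exact hLM ⟨y, rfl⟩
    | inr v =>
        simp [hT]
  have hScomp : Sᶜ = Sum.inr '' Tᶜ := by
    rw [hSdecomp]
    ext x
    cases x with
    | inl y => simp
    | inr v => simp
  -- cardinalities
  have hmN : Nat.card ↥G.edgeSet = m := Nat.card_coe_set_eq G.edgeSet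
  have hrange : (Set.range (Sum.inl : (Fin l ⊕ ↥G.edgeSet) → BetaVert V G k)).ncard = l + m := by
    rw [← Nat.card_coe_set_eq, Nat.card_range_of_injective Sum.inl_injective,
      Nat.card_sum, Nat.card_eq_fintype_card, Fintype.card_fin, hmN]
  have hdisj : Disjoint (Set.range (Sum.inl : (Fin l ⊕ ↥G.edgeSet) → BetaVert V G k))
      (Sum.inr '' T) := by
    rw [Set.disjoint_left]
    rintro x ⟨y, rfl⟩ ⟨v, _, h⟩
    exact Sum.inr_ne_inl h
  have hScard : S.ncard = l + m + T.ncard := by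
    rw [hSdecomp, Set.ncard_union_eq hdisj (Set.toFinite _) (Set.toFinite _), hrange,
      Set.ncard_image_of_injective _ Sum.inr_injective]
  have hTcomp : T.ncard + Tᶜ.ncard = n := by
    rw [Set.ncard_add_ncard_compl, hn, Nat.card_eq_fintype_card]
  have hSccard : Sᶜ.ncard = Tᶜ.ncard := by
    rw [hScomp, Set.ncard_image_of_injective _ Sum.inr_injective]
  -- get a vertex of N in S
  obtain ⟨x, hxS, hxLM⟩ := Set.exists_of_ssubset hsub
  obtain (y | v) := x
  · exact absurd ⟨y, rfl⟩ hxLM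
  have hvT : v ∈ T := hxS
  -- get a neighbor w of v
  have hcard3 : 1 < n := by omega
  obtain ⟨w', hw'⟩ := Fintype.exists_ne_of_one_lt_card hcard3 v
  obtain ⟨w, hadj⟩ : ∃ w, G.Adj v w := by
    obtain ⟨p⟩ := hconn v w'
    cases p with
    | nil => exact absurd rfl hw'.symm
    | cons h q => exact ⟨_, h⟩
  have hvw : v ≠ w := G.ne_of_adj hadj
  set e : ↥G.edgeSet := ⟨s(v, w), G.mem_edgeSet.mpr hadj⟩ with he
  set E : BetaVert V G k := Sum.inl (Sum.inr e) with hE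
  have hES : E ∈ S := hLM ⟨Sum.inr e, rfl⟩
  set C : Set V := ({v, w} : Set V)ᶜ with hC
  have heC : {u : V | u ∉ (e : Sym2 V)} = C := by
    ext u
    simp only [Set.mem_setOf_eq, he, hC, Set.mem_compl_iff, Set.mem_insert_iff,
      Set.mem_singleton_iff, Sym2.mem_iff]
  -- neighbor set of E
  have hNbr : (betaGraph G k).neighborSet E =
      Set.range (fun a : Fin l => Sum.inl (Sum.inl a)) ∪ Sum.inr '' C := by
    rw [← heC]
    ext x
    obtain ((a | f) | u) := x
    · simp only [mem_neighborSet, Set.mem_union, Set.mem_range, Set.mem_image]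
      constructor
      · intro _; exact Or.inl ⟨a, rfl⟩
      · intro _; exact trivial
    · constructor
      · intro h; exact absurd h (by simp [betaGraph, hE])
      · rintro (⟨a, h⟩ | ⟨u, _, h⟩) <;> simp at h
    · simp only [mem_neighborSet, hE]
      constructor
      · intro h
        exact Or.inr ⟨u, h, rfl⟩
      · rintro (⟨a, h⟩ | ⟨u', hu', h⟩)
        · simp at h
        · obtain rfl : u' = u := by simpa using h
          exact hu'
  -- deg in S
  have hinjL : Function.Injective (fun a : Fin l => (Sum.inl (Sum.inl a) : BetaVert V G k)) := by
    intro a b h; simpa using h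
  have hdegS : degIn (betaGraph G k) S E = l + (T ∩ C).ncard := by
    have h1 : S ∩ (betaGraph G k).neighborSet E =
        Set.range (fun a : Fin l => Sum.inl (Sum.inl a)) ∪ Sum.inr '' (T ∩ C) := by
      rw [hSdecomp, hNbr]
      ext x
      obtain ((a | f) | u) := x <;>
        simp [Set.mem_image, and_comm]
    rw [degIn, h1, Set.ncard_union_eq ?_ (Set.toFinite _) (Set.toFinite _),
      Set.ncard_image_of_injective _ Sum.inr_injective]
    · congr 1
      rw [← Nat.card_coe_set_eq, Nat.card_range_of_injective hinjL,
        Nat.card_eq_fintype_card, Fintype.card_fin]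
    · rw [Set.disjoint_left]
      rintro x ⟨a, rfl⟩ ⟨u, _, h⟩
      exact Sum.inr_ne_inl h
  -- deg in complement
  have hdegSc : degIn (betaGraph G k) Sᶜ E = (Tᶜ ∩ C).ncard := by
    have h1 : Sᶜ ∩ (betaGraph G k).neighborSet E = Sum.inr '' (Tᶜ ∩ C) := by
      rw [hScomp, hNbr]
      ext x
      obtain ((a | f) | u) := x <;> simp [Set.mem_image, and_comm]
    rw [degIn, h1, Set.ncard_image_of_injective _ Sum.inr_injective]
  -- cardinal facts
  have hs1 : (T ∩ C).ncard < T.ncard := by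
    apply Set.ncard_lt_ncard _ (Set.toFinite T)
    constructor
    · exact Set.inter_subset_left
    · intro hsub2
      have := hsub2 hvT
      simp [hC] at this
  have hCsplit : (T ∩ C).ncard + (Tᶜ ∩ C).ncard = C.ncard := by
    rw [← Set.ncard_union_eq ?_ (Set.toFinite _) (Set.toFinite _)]
    · congr 1
      rw [← Set.union_inter_distrib_right, Set.union_compl_self, Set.univ_inter]
    · exact Disjoint.mono Set.inter_subset_left Set.inter_subset_left disjoint_compl_right
  have hpair : ({v, w} : Set V).ncard = 2 := Set.ncard_pair hvw
  have hCcard : ({v, w} : Set V).ncard + C.ncard = n := by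
    rw [hC, Set.ncard_add_ncard_compl, hn, Nat.card_eq_fintype_card]
  have hIneq := hPDS.2.2 E hES
  rw [hdegS, hdegSc, hScard, hSccard] at hIneq
  have hedge : n ≤ m + 1 := connected_card_le hconn
  have hm1 : 1 ≤ m := by
    have : 0 < G.edgeSet.ncard := (Set.ncard_pos (Set.toFinite _)).mpr ⟨_, e.2⟩
    omega
  have ht1 : 1 ≤ T.ncard := by
    have : 0 < T.ncard := (Set.ncard_pos (Set.toFinite _)).mpr ⟨v, hvT⟩
    omega
  rw [hScard]
  by_contra hcon
  push_neg at hcon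
  have htk : T.ncard < k := by omega
  -- abbreviations
  set t := T.ncard with ht
  set tc := Tᶜ.ncard with htc
  set s1 := (T ∩ C).ncard with hs1d
  set s2 := (Tᶜ ∩ C).ncard with hs2d
  obtain ⟨w1, hw1⟩ : ∃ w1, k + 1 + w1 = n := ⟨n - k - 1, by omega⟩
  obtain ⟨A, hA⟩ : ∃ A, A = m * w1 := ⟨_, rfl⟩
  have hl2 : l = A - k + 1 := by
    rw [hA]
    have : w1 = n - k - 1 := by omega
    rw [this]
    rfl
  have hkA : k + 1 ≤ A := by
    have h1 : m * 1 ≤ m * w1 := Nat.mul_le_mul_left m (by omega)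
    rw [mul_one, ← hA] at h1
    omega
  have hlA : l + k = A + 1 := by omega
  obtain ⟨t1, ht1e⟩ : ∃ t1, t = t1 + 1 := ⟨t - 1, by omega⟩
  obtain ⟨u1, hu1e⟩ : ∃ u1, tc = u1 + 1 := ⟨tc - 1, by omega⟩
  have hs2ge : u1 ≤ s2 := by omega
  have hu1ge : w1 + 1 ≤ u1 := by omega
  have hcore : l + t1 < u1 * m := by
    have h1 : (w1 + 1) * m ≤ u1 * m := Nat.mul_le_mul_right m hu1ge
    have h2 : (w1 + 1) * m = A + m := by rw [hA]; ring
    -- l + t1 ≤ A - 1 < A + m ≤ u1 * m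
    have h3 : l + t1 + 2 ≤ A + 1 := by omega
    omega
  have hb : (l + t1) * (u1 + 1) < u1 * (l + m + t1) := by
    have e1 : (l + t1) * (u1 + 1) = (l + t1) * u1 + (l + t1) := by ring
    have e2 : u1 * (l + m + t1) = (l + t1) * u1 + u1 * m := by ring
    rw [e1, e2]
    exact Nat.add_lt_add_left hcore _
  have hmt : l + m + t - 1 = l + m + t1 := by omega
  rw [hmt] at hIneq
  have final : (l + s1) * tc < s2 * (l + m + t1) :=
    calc (l + s1) * tc ≤ (l + t1) * tc := Nat.mul_le_mul_right _ (by omega)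
    _ = (l + t1) * (u1 + 1) := by rw [hu1e]
    _ < u1 * (l + m + t1) := hb
    _ ≤ s2 * (l + m + t1) := Nat.mul_le_mul_right _ hs2ge
  omega
end
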